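/- Let K ≥ 1 be a real number and let (x₁,y₁), (x₂,y₂) ∈ ℝ² with (x₁,y₁) ≠ (x₂,y₂). Then the 6×6 real matrix M = [[x₁, y₁, 0, 0, 1, 0], [0, 0, x₁, y₁, 0, 1], [x₂, y₂, 0, 0, 1, 0], [0, 0, x₂, y₂, 0, 1], [1/K, 0, 0, −1, 0, 0], [0, K, 1, 0, 0, 0]] is nonsingular (its determinant is nonzero). -/

import Mathlib

set_option maxRecDepth 4000
set_option maxHeartbeats 2000000

theorem fsqc_matrix_nonsingular (K x₁ y₁ x₂ y₂ : ℝ) (hK : 1 ≤ K)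
    (hne : (x₁, y₁) ≠ (x₂, y₂)) :
    (Matrix.det !![x₁, y₁, 0, 0, 1, 0;
                   0, 0, x₁, y₁, 0, 1;
                   x₂, y₂, 0, 0, 1, 0;
                   0, 0, x₂, y₂, 0, 1;
                   1/K, 0, 0, -1, 0, 0;
                   0, K, 1, 0, 0, 0]) ≠ 0 := by
  have hK0 : (0:ℝ) < K := by linarith
  have hKne : K ≠ 0 := ne_of_gt hK0
  have hdet : (Matrix.det !![x₁, y₁, 0, 0, 1, 0;
                   0, 0, x₁, y₁, 0, 1;
                   x₂, y₂, 0, 0, 1, 0;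
                   0, 0, x₂, y₂, 0, 1;
                   1/K, 0, 0, -1, 0, 0;
                   0, K, 1, 0, 0, 0])
      = -(K * (x₂ - x₁)^2 + (y₂ - y₁)^2 / K) := by
    simp [Matrix.det_succ_row_zero, Fin.sum_univ_succ]
    simp [Fin.succAbove, Fin.lt_def]
    field_simp
    ring
  rw [hdet]
  have hor : x₂ - x₁ ≠ 0 ∨ y₂ - y₁ ≠ 0 := by
    by_contra h
    push_neg at h
    obtain ⟨h1, h2⟩ := h
    exact hne (by simp [Prod.ext_iff]; constructor <;> linarith)
  have hpos : 0 < K * (x₂ - x₁)^2 + (y₂ - y₁)^2 / K := by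
    rcases hor with h | h
    · have h1 : 0 < K * (x₂ - x₁)^2 := by positivity
      have h2 : 0 ≤ (y₂ - y₁)^2 / K := by positivity
      linarith
    · have h1 : 0 ≤ K * (x₂ - x₁)^2 := by positivity
      have h2 : 0 < (y₂ - y₁)^2 / K := by positivity
      linarith
  intro h
  linarith
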